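/- The prover derived from a depth Hintikka tree is complete: if φ is logically valid then the sum of weights of the constituents in its dnf equals 1. -/
import Mathlib

/-- Completeness of the prover derived from a depth Hintikka tree: a depth
Hintikka tree assigns weight 0 to every inconsistent constituent, the weights
of the depth-`d` constituents sum to 1, and a depth-`d` sentence is logically
valid iff its dnf contains every consistent depth-`d` constituent.  If `φ` is
logically valid, then the sum of the weights of the constituents in its dnf
equals 1. -/
theorem stmt18 {C S : Type} [Fintype C] (h : C → ℝ) (consistent : C → Prop)
    (valid : S → Prop) (dnf : S → Finset C)
    (hsum : ∑ δ : C, h δ = 1)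
    (hdepth : ∀ δ : C, ¬ consistent δ → h δ = 0)
    (hvalid : ∀ φ : S, valid φ ↔ ∀ δ : C, consistent δ → δ ∈ dnf φ)
    (φ : S) (hv : valid φ) :
    ∑ δ ∈ dnf φ, h δ = 1 := by
  rw [← hsum]
  refine Finset.sum_subset (Finset.subset_univ _) ?_
  intro δ _ hδ
  exact hdepth δ fun hc => hδ ((hvalid φ).mp hv δ hc)
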